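/- arXiv:1201.6002 — 2 statements merged into one kernel-verified Lean document; each statement's English description precedes it below -/
import Mathlib

section
/- Mean Value Trace Inequality. Let I be an interval of the real line, let g : I → ℝ be weakly increasing, and let h : I → ℝ be differentiable with convex derivative h'. Then for all d×d Hermitian matrices A, B whose eigenvalues lie in I, tr̄[(g(A) − g(B))·(h(A) − h(B))] ≤ (1/2) tr̄[(g(A) − g(B))·(A − B)·(h'(A) + h'(B))]. If instead h' is concave, the inequality is reversed. The same inequalities hold with the normalized trace tr̄ replaced by the standard trace. -/
open MeasureTheory
open scoped ComplexOrder Classical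

noncomputable instance {m n : ℕ} : MeasurableSpace (Matrix (Fin m) (Fin n) ℂ) :=
  inferInstanceAs (MeasurableSpace (Fin m → Fin n → ℂ))

/-- The spectral norm (largest singular value) of a complex matrix. -/
noncomputable def specNorm {m n : ℕ} (A : Matrix (Fin m) (Fin n) ℂ) : ℝ :=
  ‖LinearMap.toContinuousLinearMap (Matrix.toEuclideanLin A)‖

/-- The largest eigenvalue of a Hermitian matrix, via the Rayleigh quotient. -/
noncomputable def lmax {d : ℕ} (A : Matrix (Fin d) (Fin d) ℂ) : ℝ :=
  ⨆ x : Metric.sphere (0 : EuclideanSpace ℂ (Fin d)) 1,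
    (inner ℂ ((x : EuclideanSpace ℂ (Fin d))) (Matrix.toEuclideanLin A x) : ℂ).re

/-- The smallest eigenvalue of a Hermitian matrix, via the Rayleigh quotient. -/
noncomputable def lmin {d : ℕ} (A : Matrix (Fin d) (Fin d) ℂ) : ℝ :=
  ⨅ x : Metric.sphere (0 : EuclideanSpace ℂ (Fin d)) 1,
    (inner ℂ ((x : EuclideanSpace ℂ (Fin d))) (Matrix.toEuclideanLin A x) : ℂ).re

/-- The matrix exponential. -/
noncomputable def mexp {d : ℕ} (A : Matrix (Fin d) (Fin d) ℂ) : Matrix (Fin d) (Fin d) ℂ :=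
  NormedSpace.exp A

/-- The Schatten `p`-norm `(tr |B|^p)^(1/p)` of a complex matrix, computed via the
eigenvalues of `Bᴴ * B`. -/
noncomputable def schattenNorm {d : ℕ} (p : ℝ) (B : Matrix (Fin d) (Fin d) ℂ) : ℝ :=
  (∑ i, (Matrix.posSemidef_conjTranspose_mul_self B).isHermitian.eigenvalues i ^ (p / 2)) ^ (1 / p)

/-- The positive-semidefinite square root of a psd matrix (junk value `0` otherwise). -/
noncomputable def psdSqrt {d : ℕ} (M : Matrix (Fin d) (Fin d) ℂ) : Matrix (Fin d) (Fin d) ℂ :=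
  if h : M.PosSemidef then
    h.1.eigenvectorUnitary.1 * Matrix.diagonal ((↑) ∘ Real.sqrt ∘ h.1.eigenvalues) *
      (star h.1.eigenvectorUnitary : Matrix (Fin d) (Fin d) ℂ)
  else 0

/-- The entrywise expectation of a random matrix. -/
noncomputable def matMean {Ω : Type*} [MeasurableSpace Ω] (μ : Measure Ω) {d : ℕ}
    (X : Ω → Matrix (Fin d) (Fin d) ℂ) : Matrix (Fin d) (Fin d) ℂ :=
  Matrix.of fun i j => ∫ ω, X ω i j ∂μ

/-- The normalized trace mgf `θ ↦ 𝔼 tr̄ exp (θ X)` of a random Hermitian matrix. -/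
noncomputable def traceMgf {Ω : Type*} [MeasurableSpace Ω] (μ : Measure Ω) {d : ℕ}
    (X : Ω → Matrix (Fin d) (Fin d) ℂ) (θ : ℝ) : ℝ :=
  ∫ ω, (Matrix.trace (mexp ((θ : ℂ) • X ω))).re / d ∂μ

/-- `(X, X') = (Ψ(Z), Ψ(Z'))` is a matrix Stein pair with scale factor `α`:
`(Z, Z')` is an exchangeable pair, `Ψ` takes Hermitian values,
`𝔼[X - X' ∣ Z] = α X` a.s., `α ∈ (0, 1]`, and `𝔼‖X‖² < ∞`. -/
structure IsMatrixSteinPair {Ω 𝒵 : Type*} [MeasurableSpace Ω] [MeasurableSpace 𝒵]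
    {d : ℕ} (μ : Measure Ω) (Z Z' : Ω → 𝒵) (Ψ : 𝒵 → Matrix (Fin d) (Fin d) ℂ)
    (α : ℝ) : Prop where
  measurable_fst : Measurable Z
  measurable_snd : Measurable Z'
  measurable_psi : ∀ i j, Measurable fun z => Ψ z i j
  hermitian : ∀ z, (Ψ z).IsHermitian
  exchangeable : μ.map (fun ω => (Z ω, Z' ω)) = μ.map fun ω => (Z' ω, Z ω)
  alpha_pos : 0 < α
  alpha_le_one : α ≤ 1
  stein : ∀ i j,
    μ[(fun ω => Ψ (Z ω) i j - Ψ (Z' ω) i j) | MeasurableSpace.comap Z inferInstance]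
      =ᵐ[μ] fun ω => (α : ℂ) * Ψ (Z ω) i j
  memLp_two : ∀ i j, MemLp (fun ω => Ψ (Z ω) i j) 2 μ

/-- The conditional variance `Δ_X = (1/(2α)) 𝔼[(X - X')² ∣ Z]` of a matrix Stein pair,
defined entrywise via conditional expectation with respect to `σ(Z)`. -/
noncomputable def condVar {Ω 𝒵 : Type*} [MeasurableSpace Ω] [MeasurableSpace 𝒵]
    {d : ℕ} (μ : Measure Ω) (Z Z' : Ω → 𝒵) (Ψ : 𝒵 → Matrix (Fin d) (Fin d) ℂ)
    (α : ℝ) : Ω → Matrix (Fin d) (Fin d) ℂ := fun ω =>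
  Matrix.of fun i j => (1 / (2 * α) : ℂ) *
    (μ[(fun ω' => ((Ψ (Z ω') - Ψ (Z' ω')) * (Ψ (Z ω') - Ψ (Z' ω'))) i j)
      | MeasurableSpace.comap Z inferInstance]) ω

/-- `s ↦ s log s` (with `0 log 0 = 0`) applied to the eigenvalues of a Hermitian matrix
(junk value `0` otherwise). -/
noncomputable def matLogSelf {d : ℕ} (M : Matrix (Fin d) (Fin d) ℂ) : Matrix (Fin d) (Fin d) ℂ :=
  if h : M.IsHermitian then h.cfc (fun x => x * Real.log x) else 0


section Aux

variable {d : ℕ} {A B : Matrix (Fin d) (Fin d) ℂ}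

lemma mvt_cfc_one (hA : A.IsHermitian) : hA.cfc (fun _ => (1:ℝ)) = 1 := by
  simp only [Matrix.IsHermitian.cfc, Unitary.conjStarAlgAut_apply]
  have h0 : ((RCLike.ofReal (K := ℂ)) ∘ (fun _ : ℝ => (1:ℝ)) ∘ hA.eigenvalues) = fun _ => (1:ℂ) := by
    funext i; simp [Function.comp]
  rw [h0, Matrix.diagonal_one, mul_one]
  exact (Matrix.mem_unitaryGroup_iff).mp (hA.eigenvectorUnitary).2

lemma mvt_cfc_id (hA : A.IsHermitian) : hA.cfc (fun x => x) = A := by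
  simp only [Matrix.IsHermitian.cfc]
  exact hA.spectral_theorem.symm

lemma mvt_cfc_mul (hA : A.IsHermitian) (f k : ℝ → ℝ) :
    hA.cfc f * hA.cfc k = hA.cfc (fun x => f x * k x) := by
  simp only [Matrix.IsHermitian.cfc, Unitary.conjStarAlgAut_apply]
  have h1 : star (hA.eigenvectorUnitary : Matrix (Fin d) (Fin d) ℂ) *
      (hA.eigenvectorUnitary : Matrix (Fin d) (Fin d) ℂ) = 1 :=
    (Matrix.mem_unitaryGroup_iff').mp (hA.eigenvectorUnitary).2
  have h2 : Matrix.diagonal ((RCLike.ofReal (K := ℂ)) ∘ f ∘ hA.eigenvalues) *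
      Matrix.diagonal ((RCLike.ofReal (K := ℂ)) ∘ k ∘ hA.eigenvalues) =
      Matrix.diagonal ((RCLike.ofReal (K := ℂ)) ∘ (fun x => f x * k x) ∘ hA.eigenvalues) := by
    rw [Matrix.diagonal_mul_diagonal]
    refine congrArg Matrix.diagonal ?_
    funext i
    simp [Function.comp]
  calc (hA.eigenvectorUnitary : Matrix (Fin d) (Fin d) ℂ) *
        Matrix.diagonal ((RCLike.ofReal (K := ℂ)) ∘ f ∘ hA.eigenvalues) *
        star (hA.eigenvectorUnitary : Matrix (Fin d) (Fin d) ℂ) *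
        ((hA.eigenvectorUnitary : Matrix (Fin d) (Fin d) ℂ) *
          Matrix.diagonal ((RCLike.ofReal (K := ℂ)) ∘ k ∘ hA.eigenvalues) *
          star (hA.eigenvectorUnitary : Matrix (Fin d) (Fin d) ℂ))
      = (hA.eigenvectorUnitary : Matrix (Fin d) (Fin d) ℂ) *
        Matrix.diagonal ((RCLike.ofReal (K := ℂ)) ∘ f ∘ hA.eigenvalues) *
        ((star (hA.eigenvectorUnitary : Matrix (Fin d) (Fin d) ℂ) *
          (hA.eigenvectorUnitary : Matrix (Fin d) (Fin d) ℂ)) *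
          Matrix.diagonal ((RCLike.ofReal (K := ℂ)) ∘ k ∘ hA.eigenvalues)) *
        star (hA.eigenvectorUnitary : Matrix (Fin d) (Fin d) ℂ) := by
        simp only [Matrix.mul_assoc]
    _ = _ := by rw [h1, one_mul, Matrix.mul_assoc _ (Matrix.diagonal _) (Matrix.diagonal _), h2]

lemma mvt_pair_re (hA : A.IsHermitian) (hB : B.IsHermitian) (f k : ℝ → ℝ) :
    (Matrix.trace (hA.cfc f * hB.cfc k)).re =
      ∑ i, ∑ j,
        ‖(star (hA.eigenvectorUnitary : Matrix (Fin d) (Fin d) ℂ) *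
            (hB.eigenvectorUnitary : Matrix (Fin d) (Fin d) ℂ)) i j‖ ^ 2 *
          (f (hA.eigenvalues i) * k (hB.eigenvalues j)) := by
  set U : Matrix (Fin d) (Fin d) ℂ := (hA.eigenvectorUnitary : Matrix (Fin d) (Fin d) ℂ) with hU
  set V : Matrix (Fin d) (Fin d) ℂ := (hB.eigenvectorUnitary : Matrix (Fin d) (Fin d) ℂ) with hV
  set W : Matrix (Fin d) (Fin d) ℂ := star U * V with hW
  set D : Matrix (Fin d) (Fin d) ℂ := Matrix.diagonal ((RCLike.ofReal (K := ℂ)) ∘ f ∘ hA.eigenvalues) with hD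
  set E : Matrix (Fin d) (Fin d) ℂ := Matrix.diagonal ((RCLike.ofReal (K := ℂ)) ∘ k ∘ hB.eigenvalues) with hE
  have hUU : U * star U = 1 := (Matrix.mem_unitaryGroup_iff).mp (hA.eigenvectorUnitary).2
  have hsVW : star V = star W * star U := by
    rw [hW, Matrix.star_mul, star_star, Matrix.mul_assoc, hUU, mul_one]
  have e : hA.cfc f * hB.cfc k = U * (D * W * E * star W) * star U := by
    show U * D * star U * (V * E * star V) = _
    rw [hsVW, hW]
    simp only [Matrix.mul_assoc]
  rw [e, Matrix.trace_mul_comm (U * (D * W * E * star W)) (star U), ← Matrix.mul_assoc,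
    (Matrix.mem_unitaryGroup_iff').mp (hA.eigenvectorUnitary).2, one_mul]
  have entry : ∀ i j : Fin d, (D * W * E * star W) i j =
      ∑ l, (f (hA.eigenvalues i) : ℂ) * W i l * (k (hB.eigenvalues l) : ℂ)
        * (starRingEnd ℂ) (W j l) := by
    intro i j
    rw [Matrix.mul_apply]
    refine Finset.sum_congr rfl fun l _ => ?_
    have h1 : (D * W * E) i l = (f (hA.eigenvalues i) : ℂ) * W i l * (k (hB.eigenvalues l) : ℂ) := by
      rw [Matrix.mul_diagonal, Matrix.diagonal_mul]
      rfl
    rw [h1]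
    rfl
  rw [Matrix.trace]
  rw [Complex.re_sum]
  refine Finset.sum_congr rfl fun i _ => ?_
  rw [Matrix.diag_apply, entry i i, Complex.re_sum]
  refine Finset.sum_congr rfl fun j _ => ?_
  have : (f (hA.eigenvalues i) : ℂ) * W i j * (k (hB.eigenvalues j) : ℂ) * (starRingEnd ℂ) (W i j)
      = ((‖W i j‖ ^ 2 * (f (hA.eigenvalues i) * k (hB.eigenvalues j)) : ℝ) : ℂ) := by
    have h : W i j * (starRingEnd ℂ) (W i j) = (‖W i j‖ : ℂ) ^ 2 := by
      rw [Complex.mul_conj]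
      norm_cast
      simp [Complex.normSq_eq_norm_sq]
    push_cast
    linear_combination ((f (hA.eigenvalues i) : ℂ) * (k (hB.eigenvalues j) : ℂ)) * h
  rw [this, Complex.ofReal_re]

end Aux

lemma mvt_trapezoid {I : Set ℝ} (hI : I.OrdConnected) {h h' : ℝ → ℝ}
    (hderiv : ∀ x ∈ I, HasDerivAt h (h' x) x) (hconv : ConvexOn ℝ I h')
    {x y : ℝ} (hy : y ∈ I) (hx : x ∈ I) (hyx : y ≤ x) :
    h x - h y ≤ (x - y) * (h' x + h' y) / 2 := by
  rcases eq_or_lt_of_le hyx with rfl | hlt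
  · simp
  have hxy0 : x - y ≠ 0 := ne_of_gt (sub_pos.2 hlt)
  have hsub : Set.Icc y x ⊆ I := hI.out hy hx
  set c : ℝ := (h' x - h' y) / (x - y) with hc
  set F : ℝ → ℝ := fun t => h t - (h' y * t + c * (t - y) ^ 2 / 2) with hF
  have hder : ∀ t ∈ Set.Icc y x, HasDerivAt F (h' t - (h' y + c * (t - y))) t := by
    intro t ht
    have h1 := hderiv t (hsub ht)
    have hq : HasDerivAt (fun s : ℝ => h' y * s + c * (s - y) ^ 2 / 2)
        (h' y + c * (t - y)) t := by
      have hsq : HasDerivAt (fun s : ℝ => (s - y) ^ 2) (2 * (t - y)) t := by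
        simpa [mul_comm, Function.comp_def] using (hasDerivAt_pow 2 (t - y)).comp t ((hasDerivAt_id t).sub_const y)
      have := ((hasDerivAt_id t).const_mul (h' y)).add (((hsq.const_mul c)).div_const 2)
      exact this.congr_deriv (by ring)
    exact h1.sub hq
  have hanti : AntitoneOn F (Set.Icc y x) := by
    apply antitoneOn_of_deriv_nonpos (convex_Icc y x)
    · exact fun t ht => (hder t ht).continuousAt.continuousWithinAt
    · intro t ht
      rw [interior_Icc] at ht
      exact (hder t (Set.Ioo_subset_Icc_self ht)).differentiableAt.differentiableWithinAt
    · intro t ht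
      rw [interior_Icc] at ht
      rw [(hder t (Set.Ioo_subset_Icc_self ht)).deriv]
      -- convexity: h' t ≤ ((x - t) * h' y + (t - y) * h' x) / (x - y)
      have ha : 0 ≤ (x - t) / (x - y) := by
        apply div_nonneg <;> linarith [ht.1, ht.2]
      have hb : 0 ≤ (t - y) / (x - y) := by
        apply div_nonneg <;> linarith [ht.1, ht.2]
      have hab : (x - t) / (x - y) + (t - y) / (x - y) = 1 := by
        field_simp
        ring
      have hcomb := hconv.2 hy hx ha hb hab
      have hpt : (x - t) / (x - y) * y + (t - y) / (x - y) * x = t := by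
        rw [div_mul_eq_mul_div, div_mul_eq_mul_div, ← add_div, div_eq_iff hxy0]
        ring
      simp only [smul_eq_mul] at hcomb
      rw [hpt] at hcomb
      have hlin : h' y + c * (t - y) = (x - t) / (x - y) * h' y + (t - y) / (x - y) * h' x := by
        rw [hc]
        field_simp
        ring
      linarith
  have hFxy : F x ≤ F y := hanti (Set.left_mem_Icc.2 hyx) (Set.right_mem_Icc.2 hyx) hyx
  simp only [hF] at hFxy
  have h2 : c * (x - y) ^ 2 = (h' x - h' y) * (x - y) := by
    rw [hc]
    field_simp
  nlinarith [hFxy, h2]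

lemma mvt_scalar_conv {I : Set ℝ} (hI : I.OrdConnected) {g h h' : ℝ → ℝ}
    (hg : MonotoneOn g I) (hderiv : ∀ x ∈ I, HasDerivAt h (h' x) x)
    (hconv : ConvexOn ℝ I h') {x y : ℝ} (hx : x ∈ I) (hy : y ∈ I) :
    (g x - g y) * (h x - h y) ≤ 1 / 2 * ((g x - g y) * (x - y) * (h' x + h' y)) := by
  rcases le_total y x with hyx | hxy
  · have htrap := mvt_trapezoid hI hderiv hconv hy hx hyx
    have hgm : 0 ≤ g x - g y := sub_nonneg.2 (hg hy hx hyx)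
    nlinarith [mul_le_mul_of_nonneg_left htrap hgm]
  · have htrap := mvt_trapezoid hI hderiv hconv hx hy hxy
    have hgm : 0 ≤ g y - g x := sub_nonneg.2 (hg hx hy hxy)
    nlinarith [mul_le_mul_of_nonneg_left htrap hgm]

lemma mvt_scalar_conc {I : Set ℝ} (hI : I.OrdConnected) {g h h' : ℝ → ℝ}
    (hg : MonotoneOn g I) (hderiv : ∀ x ∈ I, HasDerivAt h (h' x) x)
    (hconc : ConcaveOn ℝ I h') {x y : ℝ} (hx : x ∈ I) (hy : y ∈ I) :
    1 / 2 * ((g x - g y) * (x - y) * (h' x + h' y)) ≤ (g x - g y) * (h x - h y) := by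
  have hderiv' : ∀ x ∈ I, HasDerivAt (fun t => -h t) ((fun t => -h' t) x) x :=
    fun x hx => (hderiv x hx).neg
  have hconv' : ConvexOn ℝ I (fun t => -h' t) := hconc.neg
  have key := mvt_scalar_conv hI hg hderiv' hconv' hx hy
  beta_reduce at key
  nlinarith [key]

section AuxMVT2
variable {d : ℕ} {A : Matrix (Fin d) (Fin d) ℂ}
lemma mvt_cfc_mul' (hA : A.IsHermitian) (f k F : ℝ → ℝ) (hF : ∀ x, F x = f x * k x) :
    hA.cfc f * hA.cfc k = hA.cfc F := by
  have : F = fun x => f x * k x := funext hF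
  rw [this]
  exact mvt_cfc_mul hA f k
end AuxMVT2

/-- **Mean Value Trace Inequality.**  Let `I` be an interval, `g : I → ℝ` weakly increasing,
and `h : I → ℝ` with convex derivative `h'`.  For Hermitian `A, B` with eigenvalues in `I`,
`tr̄[(g(A) - g(B))(h(A) - h(B))] ≤ ½ tr̄[(g(A) - g(B))(A - B)(h'(A) + h'(B))]`;
the inequality reverses when `h'` is concave, and the same holds for the standard trace. -/
theorem mean_value_trace_inequality {d : ℕ} (I : Set ℝ) (hI : I.OrdConnected)
    (g h h' : ℝ → ℝ) (hg : MonotoneOn g I)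
    (hderiv : ∀ x ∈ I, HasDerivAt h (h' x) x)
    (A B : Matrix (Fin d) (Fin d) ℂ) (hA : A.IsHermitian) (hB : B.IsHermitian)
    (hAI : ∀ i, hA.eigenvalues i ∈ I) (hBI : ∀ i, hB.eigenvalues i ∈ I) :
    (ConvexOn ℝ I h' →
      (Matrix.trace ((hA.cfc g - hB.cfc g) * (hA.cfc h - hB.cfc h))).re / d
          ≤ (1 / 2) *
            (Matrix.trace ((hA.cfc g - hB.cfc g) * (A - B) * (hA.cfc h' + hB.cfc h'))).re / d ∧
      (Matrix.trace ((hA.cfc g - hB.cfc g) * (hA.cfc h - hB.cfc h))).re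
          ≤ (1 / 2) *
            (Matrix.trace ((hA.cfc g - hB.cfc g) * (A - B) * (hA.cfc h' + hB.cfc h'))).re) ∧
    (ConcaveOn ℝ I h' →
      (1 / 2) * (Matrix.trace ((hA.cfc g - hB.cfc g) * (A - B) * (hA.cfc h' + hB.cfc h'))).re / d
          ≤ (Matrix.trace ((hA.cfc g - hB.cfc g) * (hA.cfc h - hB.cfc h))).re / d ∧
      (1 / 2) * (Matrix.trace ((hA.cfc g - hB.cfc g) * (A - B) * (hA.cfc h' + hB.cfc h'))).re
          ≤ (Matrix.trace ((hA.cfc g - hB.cfc g) * (hA.cfc h - hB.cfc h))).re) := by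

  classical
  set lam : Fin d → ℝ := hA.eigenvalues with hlam
  set mu : Fin d → ℝ := hB.eigenvalues with hmu
  set w : Fin d → Fin d → ℝ := fun i j =>
    ‖(star (hA.eigenvectorUnitary : Matrix (Fin d) (Fin d) ℂ) *
        (hB.eigenvectorUnitary : Matrix (Fin d) (Fin d) ℂ)) i j‖ ^ 2 with hw
  have hw0 : ∀ i j, 0 ≤ w i j := fun i j => by simp only [hw]; positivity
  have pairP : ∀ (f k : ℝ → ℝ) (P : Fin d → Fin d → ℝ),
      (∀ i j, P i j = w i j * (f (lam i) * k (mu j))) →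
      (Matrix.trace (hA.cfc f * hB.cfc k)).re = ∑ i, ∑ j, P i j := by
    intro f k P hP
    rw [mvt_pair_re hA hB f k]
    exact Finset.sum_congr rfl fun i _ => Finset.sum_congr rfl fun j _ => by
      rw [hP i j]
  have pureA : ∀ (F : ℝ → ℝ) (P : Fin d → Fin d → ℝ),
      (∀ i j, P i j = w i j * F (lam i)) →
      (Matrix.trace (hA.cfc F)).re = ∑ i, ∑ j, P i j := by
    intro F P hP
    rw [← mul_one (hA.cfc F), ← mvt_cfc_one hB]
    exact pairP F (fun _ => 1) P fun i j => by rw [hP i j, mul_one]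
  have pureB : ∀ (F : ℝ → ℝ) (P : Fin d → Fin d → ℝ),
      (∀ i j, P i j = w i j * F (mu j)) →
      (Matrix.trace (hB.cfc F)).re = ∑ i, ∑ j, P i j := by
    intro F P hP
    rw [← one_mul (hB.cfc F), ← mvt_cfc_one hA]
    exact pairP (fun _ => 1) F P fun i j => by rw [hP i j, one_mul]
  -- The four terms of the first trace
  have t1 : (Matrix.trace (hA.cfc g * hA.cfc h)).re
      = ∑ i, ∑ j, w i j * (g (lam i) * h (lam i)) := by
    rw [mvt_cfc_mul' hA g h (fun x => g x * h x) (fun x => rfl)]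
    exact pureA _ _ fun i j => rfl
  have t2 : (Matrix.trace (hA.cfc g * hB.cfc h)).re
      = ∑ i, ∑ j, w i j * (g (lam i) * h (mu j)) :=
    pairP g h _ fun i j => rfl
  have t3 : (Matrix.trace (hB.cfc g * hA.cfc h)).re
      = ∑ i, ∑ j, w i j * (h (lam i) * g (mu j)) := by
    rw [Matrix.trace_mul_comm]
    exact pairP h g _ fun i j => rfl
  have t4 : (Matrix.trace (hB.cfc g * hB.cfc h)).re
      = ∑ i, ∑ j, w i j * (g (mu j) * h (mu j)) := by
    rw [mvt_cfc_mul' hB g h (fun x => g x * h x) (fun x => rfl)]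
    exact pureB _ _ fun i j => rfl
  have expandL : (hA.cfc g - hB.cfc g) * (hA.cfc h - hB.cfc h)
      = hA.cfc g * hA.cfc h - hA.cfc g * hB.cfc h - hB.cfc g * hA.cfc h
        + hB.cfc g * hB.cfc h := by noncomm_ring
  have eL : (Matrix.trace ((hA.cfc g - hB.cfc g) * (hA.cfc h - hB.cfc h))).re
      = ∑ i, ∑ j, w i j * ((g (lam i) - g (mu j)) * (h (lam i) - h (mu j))) := by
    rw [expandL]
    simp only [Matrix.trace_add, Matrix.trace_sub, Complex.add_re, Complex.sub_re]
    rw [t1, t2, t3, t4]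
    simp only [← Finset.sum_sub_distrib, ← Finset.sum_add_distrib]
    exact Finset.sum_congr rfl fun i _ => Finset.sum_congr rfl fun j _ => by ring
  -- The eight terms of the second trace
  have s1 : (Matrix.trace (hA.cfc g * (hA.cfc fun x => x) * hA.cfc h')).re
      = ∑ i, ∑ j, w i j * (g (lam i) * lam i * h' (lam i)) := by
    rw [mvt_cfc_mul' hA g (fun x => x) (fun x => g x * x) (fun x => rfl),
      mvt_cfc_mul' hA (fun x => g x * x) h' (fun x => g x * x * h' x) (fun x => rfl)]
    exact pureA _ _ fun i j => rfl
  have s2 : (Matrix.trace (hA.cfc g * (hA.cfc fun x => x) * hB.cfc h')).re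
      = ∑ i, ∑ j, w i j * (g (lam i) * lam i * h' (mu j)) := by
    rw [mvt_cfc_mul' hA g (fun x => x) (fun x => g x * x) (fun x => rfl)]
    exact pairP (fun x => g x * x) h' _ fun i j => rfl
  have s3 : (Matrix.trace (hA.cfc g * (hB.cfc fun x => x) * hA.cfc h')).re
      = ∑ i, ∑ j, w i j * (h' (lam i) * g (lam i) * mu j) := by
    rw [Matrix.trace_mul_comm, ← Matrix.mul_assoc,
      mvt_cfc_mul' hA h' g (fun x => h' x * g x) (fun x => rfl)]
    exact pairP (fun x => h' x * g x) (fun x => x) _ fun i j => rfl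
  have s4 : (Matrix.trace (hA.cfc g * (hB.cfc fun x => x) * hB.cfc h')).re
      = ∑ i, ∑ j, w i j * (g (lam i) * (mu j * h' (mu j))) := by
    rw [Matrix.mul_assoc, mvt_cfc_mul' hB (fun x => x) h' (fun x => x * h' x) (fun x => rfl)]
    exact pairP g (fun x => x * h' x) _ fun i j => rfl
  have s5 : (Matrix.trace (hB.cfc g * (hA.cfc fun x => x) * hA.cfc h')).re
      = ∑ i, ∑ j, w i j * (lam i * h' (lam i) * g (mu j)) := by
    rw [Matrix.mul_assoc, mvt_cfc_mul' hA (fun x => x) h' (fun x => x * h' x) (fun x => rfl),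
      Matrix.trace_mul_comm]
    exact pairP (fun x => x * h' x) g _ fun i j => rfl
  have s6 : (Matrix.trace (hB.cfc g * (hA.cfc fun x => x) * hB.cfc h')).re
      = ∑ i, ∑ j, w i j * (lam i * (h' (mu j) * g (mu j))) := by
    rw [Matrix.trace_mul_comm, ← Matrix.mul_assoc,
      mvt_cfc_mul' hB h' g (fun x => h' x * g x) (fun x => rfl), Matrix.trace_mul_comm]
    exact pairP (fun x => x) (fun x => h' x * g x) _ fun i j => rfl
  have s7 : (Matrix.trace (hB.cfc g * (hB.cfc fun x => x) * hA.cfc h')).re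
      = ∑ i, ∑ j, w i j * (h' (lam i) * (g (mu j) * mu j)) := by
    rw [mvt_cfc_mul' hB g (fun x => x) (fun x => g x * x) (fun x => rfl),
      Matrix.trace_mul_comm]
    exact pairP h' (fun x => g x * x) _ fun i j => rfl
  have s8 : (Matrix.trace (hB.cfc g * (hB.cfc fun x => x) * hB.cfc h')).re
      = ∑ i, ∑ j, w i j * (g (mu j) * mu j * h' (mu j)) := by
    rw [mvt_cfc_mul' hB g (fun x => x) (fun x => g x * x) (fun x => rfl),
      mvt_cfc_mul' hB (fun x => g x * x) h' (fun x => g x * x * h' x) (fun x => rfl)]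
    exact pureB _ _ fun i j => rfl
  have expandR : (hA.cfc g - hB.cfc g) * (A - B) * (hA.cfc h' + hB.cfc h')
      = (hA.cfc g * (hA.cfc fun x => x) * hA.cfc h'
          + hA.cfc g * (hA.cfc fun x => x) * hB.cfc h')
        - (hA.cfc g * (hB.cfc fun x => x) * hA.cfc h'
          + hA.cfc g * (hB.cfc fun x => x) * hB.cfc h')
        - (hB.cfc g * (hA.cfc fun x => x) * hA.cfc h'
          + hB.cfc g * (hA.cfc fun x => x) * hB.cfc h')
        + (hB.cfc g * (hB.cfc fun x => x) * hA.cfc h'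
          + hB.cfc g * (hB.cfc fun x => x) * hB.cfc h') := by
    rw [mvt_cfc_id hA, mvt_cfc_id hB]
    noncomm_ring
  have eR : (Matrix.trace ((hA.cfc g - hB.cfc g) * (A - B) * (hA.cfc h' + hB.cfc h'))).re
      = ∑ i, ∑ j, w i j *
          ((g (lam i) - g (mu j)) * (lam i - mu j) * (h' (lam i) + h' (mu j))) := by
    rw [expandR]
    simp only [Matrix.trace_add, Matrix.trace_sub, Complex.add_re, Complex.sub_re]
    rw [s1, s2, s3, s4, s5, s6, s7, s8]
    simp only [← Finset.sum_sub_distrib, ← Finset.sum_add_distrib]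
    exact Finset.sum_congr rfl fun i _ => Finset.sum_congr rfl fun j _ => by ring
  have hdiv : ∀ a b : ℝ, a ≤ b → a / (d : ℝ) ≤ b / (d : ℝ) := by
    intro a b hab
    rcases Nat.eq_zero_or_pos d with rfl | hd
    · simp
    · exact div_le_div_of_nonneg_right hab (by positivity)
  constructor
  · intro hconv
    have main : (Matrix.trace ((hA.cfc g - hB.cfc g) * (hA.cfc h - hB.cfc h))).re
        ≤ 1 / 2 *
          (Matrix.trace ((hA.cfc g - hB.cfc g) * (A - B) * (hA.cfc h' + hB.cfc h'))).re := by
      rw [eL, eR, Finset.mul_sum]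
      refine Finset.sum_le_sum fun i _ => ?_
      rw [Finset.mul_sum]
      refine Finset.sum_le_sum fun j _ => ?_
      have hs := mvt_scalar_conv hI hg hderiv hconv (hAI i) (hBI j)
      calc w i j * ((g (lam i) - g (mu j)) * (h (lam i) - h (mu j)))
          ≤ w i j * (1 / 2 * ((g (lam i) - g (mu j)) * (lam i - mu j)
              * (h' (lam i) + h' (mu j)))) := mul_le_mul_of_nonneg_left hs (hw0 i j)
        _ = 1 / 2 * (w i j * ((g (lam i) - g (mu j)) * (lam i - mu j)
              * (h' (lam i) + h' (mu j)))) := by ring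
    exact ⟨hdiv _ _ main, main⟩
  · intro hconc
    have main : 1 / 2 *
          (Matrix.trace ((hA.cfc g - hB.cfc g) * (A - B) * (hA.cfc h' + hB.cfc h'))).re
        ≤ (Matrix.trace ((hA.cfc g - hB.cfc g) * (hA.cfc h - hB.cfc h))).re := by
      rw [eL, eR, Finset.mul_sum]
      refine Finset.sum_le_sum fun i _ => ?_
      rw [Finset.mul_sum]
      refine Finset.sum_le_sum fun j _ => ?_
      have hs := mvt_scalar_conc hI hg hderiv hconc (hAI i) (hBI j)
      calc 1 / 2 * (w i j * ((g (lam i) - g (mu j)) * (lam i - mu j)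
              * (h' (lam i) + h' (mu j))))
          = w i j * (1 / 2 * ((g (lam i) - g (mu j)) * (lam i - mu j)
              * (h' (lam i) + h' (mu j)))) := by ring
        _ ≤ w i j * ((g (lam i) - g (mu j)) * (h (lam i) - h (mu j))) :=
            mul_le_mul_of_nonneg_left hs (hw0 i j)
    exact ⟨hdiv _ _ main, main⟩
end

section
/- Generalized Klein Inequality. Let u_1,…,u_n and v_1,…,v_n be real-valued functions on an interval I of the real line such that Σ_{k=1}^n u_k(a)·v_k(b) ≥ 0 for all a, b ∈ I. Then tr̄[Σ_{k=1}^n u_k(A)·v_k(B)] ≥ 0 for all d×d Hermitian matrices A, B whose eigenvalues lie in I. -/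
open MeasureTheory
open scoped ComplexOrder Classical

open Matrix in
lemma klein_trace_aux {d : ℕ} (U V : Matrix (Fin d) (Fin d) ℂ) (a b : Fin d → ℂ) :
    Matrix.trace (U * Matrix.diagonal a * star U * (V * Matrix.diagonal b * star V)) =
    ∑ p, ∑ q, a p * b q * ((star U * V) p q * (starRingEnd ℂ) ((star U * V) p q)) := by
  have h1 : U * Matrix.diagonal a * star U * (V * Matrix.diagonal b * star V)
      = U * (Matrix.diagonal a * (star U * V) * Matrix.diagonal b * star V) := by
    noncomm_ring
  rw [h1, Matrix.trace_mul_comm]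
  have h2 : Matrix.diagonal a * (star U * V) * Matrix.diagonal b * star V * U
      = Matrix.diagonal a * (star U * V * Matrix.diagonal b * star (star U * V)) := by
    rw [Matrix.star_mul, star_star]; noncomm_ring
  rw [h2, Matrix.trace]
  rw [show ∀ M : Matrix (Fin d) (Fin d) ℂ, ∑ i, (Matrix.diagonal a * M).diag i
      = ∑ i, a i * M i i from fun M => by
    simp [Matrix.diag_apply, Matrix.diagonal_mul]]
  apply Finset.sum_congr rfl; intro p _
  simp only [Matrix.mul_apply, Matrix.mul_diagonal, Matrix.star_apply, RCLike.star_def,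
    Finset.mul_sum, Matrix.diagonal_apply, mul_ite, mul_zero, Finset.sum_ite_eq,
    Finset.sum_ite_eq', Finset.mem_univ, if_true]
  apply Finset.sum_congr rfl; intro q _
  ring


/-- **Generalized Klein Inequality.**  If `Σ_k u_k(a) v_k(b) ≥ 0` for all `a, b` in an
interval `I`, then `tr̄ [Σ_k u_k(A) v_k(B)] ≥ 0` for all Hermitian matrices `A, B`
whose eigenvalues lie in `I`. -/
theorem generalized_klein_inequality {d n : ℕ} (I : Set ℝ) (hI : I.OrdConnected)
    (u v : Fin n → ℝ → ℝ)
    (huv : ∀ a ∈ I, ∀ b ∈ I, 0 ≤ ∑ k, u k a * v k b)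
    (A B : Matrix (Fin d) (Fin d) ℂ) (hA : A.IsHermitian) (hB : B.IsHermitian)
    (hAI : ∀ i, hA.eigenvalues i ∈ I) (hBI : ∀ i, hB.eigenvalues i ∈ I) :
    0 ≤ (Matrix.trace (∑ k, hA.cfc (u k) * hB.cfc (v k))).re / d := by
  apply div_nonneg _ (Nat.cast_nonneg d)
  set U := (hA.eigenvectorUnitary : Matrix (Fin d) (Fin d) ℂ)
  set V := (hB.eigenvectorUnitary : Matrix (Fin d) (Fin d) ℂ)
  set W := star U * V with hW
  have key : ∀ k : Fin n, Matrix.trace (hA.cfc (u k) * hB.cfc (v k)) =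
      ∑ p, ∑ q, ((u k (hA.eigenvalues p) : ℂ) * (v k (hB.eigenvalues q) : ℂ) *
        (Complex.normSq (W p q) : ℂ)) := by
    intro k
    rw [Matrix.IsHermitian.cfc, Matrix.IsHermitian.cfc]
    simp only [Unitary.conjStarAlgAut_apply, Unitary.coe_star]
    rw [klein_trace_aux]
    simp [Complex.mul_conj, Function.comp]
    rfl
  have htr : Matrix.trace (∑ k, hA.cfc (u k) * hB.cfc (v k))
      = ((∑ p, ∑ q, (∑ k, u k (hA.eigenvalues p) * v k (hB.eigenvalues q)) *
          Complex.normSq (W p q) : ℝ) : ℂ) := by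
    rw [Matrix.trace_sum]
    calc ∑ k, Matrix.trace (hA.cfc (u k) * hB.cfc (v k))
        = ∑ k, ∑ p, ∑ q, ((u k (hA.eigenvalues p) : ℂ) * (v k (hB.eigenvalues q) : ℂ) *
            (Complex.normSq (W p q) : ℂ)) := Finset.sum_congr rfl fun k _ => key k
      _ = ∑ p, ∑ q, ∑ k, ((u k (hA.eigenvalues p) : ℂ) * (v k (hB.eigenvalues q) : ℂ) *
            (Complex.normSq (W p q) : ℂ)) := by
          rw [Finset.sum_comm]
          exact Finset.sum_congr rfl fun p _ => Finset.sum_comm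
      _ = _ := by
          push_cast
          simp only [Finset.sum_mul]
  rw [htr, Complex.ofReal_re]
  apply Finset.sum_nonneg; intro p _
  apply Finset.sum_nonneg; intro q _
  exact mul_nonneg (huv _ (hAI p) _ (hBI q)) (Complex.normSq_nonneg _)
end
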